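/- Fix integers d ≥ 2 and 0 ≤ k ≤ d−1. Then the sequence of rational numbers F(d,n,k) / Ffac(d,n) tends to ρ(d, d−k−1) as n → ∞. -/

import Mathlib

noncomputable section

/-- `ρ(d,k) = (1/2)(binom(⌈d/2⌉,k) + binom(⌊d/2⌋,k))`. -/
def rho (d k : ℕ) : ℚ :=
  (((d + 1) / 2).choose k + (d / 2).choose k) / 2

/-- Extended binomial coefficient: `binom(a,b) = 0` unless `0 ≤ b ≤ a`. -/
def ichoose (a b : ℤ) : ℤ :=
  if 0 ≤ b ∧ b ≤ a then (a.toNat).choose b.toNat else 0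

/-- `δ(d) = ⌈d/2⌉ - ⌊d/2⌋`. -/
def deltaPar (d : ℕ) : ℕ := (d + 1) / 2 - d / 2

/-- `F(d,n,k)`, the number of `k`-faces of the cyclic polytope `C(d,n)` (for `d ≥ 2`). -/
def Fcyc (d n k : ℕ) : ℚ :=
  (((n : ℚ) - (deltaPar d : ℚ) * ((n : ℚ) - (k : ℚ) - 2)) / ((n : ℚ) - (k : ℚ) - 1)) *
    ∑ j ∈ Finset.range (d / 2 + 1),
      (ichoose ((n : ℤ) - 1 - (j : ℤ)) ((k : ℤ) + 1 - (j : ℤ)) : ℚ) *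
        (ichoose ((n : ℤ) - (k : ℤ) - 1) (2 * (j : ℤ) - (k : ℤ) - 1 + (deltaPar d : ℤ)) : ℚ)

/-- `Ffac(d,n)`, the number of facets of the cyclic polytope `C(d,n)` (for `d ≥ 2`). -/
def Ffac (d n : ℕ) : ℚ :=
  (ichoose ((n : ℤ) - (((d + 1) / 2 : ℕ) : ℤ)) ((n : ℤ) - (d : ℤ)) : ℚ) +
    (ichoose ((n : ℤ) - (((d + 2) / 2 : ℕ) : ℤ)) ((n : ℤ) - (d : ℤ)) : ℚ)

section AuxLimits
open Filter Finset

lemma ichoose_neg {a b : ℤ} (hb : b < 0) : ichoose a b = 0 := by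
  rw [ichoose, if_neg]; omega

lemma ichoose_eq {a : ℤ} {r : ℕ} (h : (r : ℤ) ≤ a) :
    ichoose a r = (a.toNat).choose r := by
  rw [ichoose, if_pos ⟨Int.natCast_nonneg r, h⟩, Int.toNat_natCast]

lemma invn : Tendsto (fun n : ℕ => ((n:ℚ))⁻¹) atTop (nhds 0) :=
  tendsto_inv_atTop_zero.comp tendsto_natCast_atTop_atTop

lemma cdivn (c : ℚ) : Tendsto (fun n : ℕ => c / (n:ℚ)) atTop (nhds 0) := by
  have := invn.const_mul c
  rw [mul_zero] at this
  simpa only [div_eq_mul_inv] using this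

lemma lim_choose (a : ℤ) (r : ℕ) :
    Tendsto (fun n : ℕ => (ichoose ((n:ℤ) - a) r : ℚ) / (n:ℚ)^r) atTop
      (nhds ((r.factorial : ℚ)⁻¹)) := by
  have key : ∀ᶠ n : ℕ in atTop,
      (ichoose ((n:ℤ) - a) r : ℚ) / (n:ℚ)^r
        = (∏ i ∈ range r, (1 - ((a:ℚ) + i) / n)) / r.factorial := by
    filter_upwards [eventually_ge_atTop (a.toNat + r + 1)] with n hn
    have hn1 : (1:ℕ) ≤ n := by omega
    have ha : (r : ℤ) ≤ (n:ℤ) - a := by omega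
    have hnQ : (n:ℚ) ≠ 0 := by positivity
    rw [ichoose_eq ha]
    set m := ((n:ℤ) - a).toNat with hm
    have hmr : r ≤ m := by omega
    have hmZ : (m : ℤ) = (n:ℤ) - a := Int.toNat_of_nonneg (by omega)
    have hmQ : (m : ℚ) = (n:ℚ) - a := by exact_mod_cast congrArg (fun z : ℤ => (z : ℚ)) hmZ
    have hd : (m.descFactorial r : ℚ) = r.factorial * (m.choose r) := by
      rw [Nat.descFactorial_eq_factorial_mul_choose]; push_cast; ring
    have hprod : (m.descFactorial r : ℚ) = ∏ i ∈ range r, ((n:ℚ) - a - i) := by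
      rw [Nat.descFactorial_eq_prod_range]
      push_cast
      refine Finset.prod_congr rfl fun i hi => ?_
      have hi' : i < r := Finset.mem_range.mp hi
      have h1 : ((m - i : ℕ) : ℚ) = (m : ℚ) - i := by
        have : i ≤ m := by omega
        push_cast [this]; ring
      rw [h1, hmQ]
    have hchoose : (m.choose r : ℚ) = (∏ i ∈ range r, ((n:ℚ) - a - i)) / r.factorial := by
      rw [← hprod, hd]; field_simp
    push_cast
    rw [hchoose, div_right_comm]
    congr 1
    rw [show ((n:ℚ))^r = ∏ _i ∈ range r, (n:ℚ) by simp, ← Finset.prod_div_distrib]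
    exact Finset.prod_congr rfl fun i _ => by field_simp; ring
  refine Tendsto.congr' (EventuallyEq.symm key) ?_
  have hprod : Tendsto (fun n : ℕ => ∏ i ∈ range r, (1 - ((a:ℚ) + i) / n)) atTop
      (nhds (∏ _i ∈ range r, (1:ℚ))) := by
    refine tendsto_finset_prod _ fun i _ => ?_
    have := (cdivn ((a:ℚ) + i)).const_sub 1
    rw [sub_zero] at this
    exact this
  have := hprod.div_const (r.factorial : ℚ)
  simpa using this

lemma lim_pow_ratio {q p : ℕ} (h : q ≤ p) :
    Tendsto (fun n : ℕ => (n:ℚ)^q / (n:ℚ)^p) atTop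
      (nhds (if q = p then 1 else 0)) := by
  have key : ∀ᶠ n : ℕ in atTop, (n:ℚ)^q / (n:ℚ)^p = (((n:ℚ))⁻¹)^(p - q) := by
    filter_upwards [eventually_ge_atTop 1] with n hn
    have hnQ : (n:ℚ) ≠ 0 := by positivity
    have h2 : (n:ℚ)^p = (n:ℚ)^q * (n:ℚ)^(p - q) := by
      rw [← pow_add]; congr 1; omega
    rw [h2, ← div_div, div_self (pow_ne_zero _ hnQ), one_div, inv_pow]
  refine Tendsto.congr' (EventuallyEq.symm key) ?_
  rcases eq_or_lt_of_le h with rfl | hlt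
  · simpa using tendsto_const_nhds
  · rw [if_neg (by omega)]
    have := invn.pow (p - q)
    rwa [zero_pow (by omega)] at this

open Filter Finset

lemma lim_choose' (a : ℤ) {r p : ℕ} (h : r ≤ p) :
    Tendsto (fun n : ℕ => (ichoose ((n:ℤ) - a) r : ℚ) / (n:ℚ)^p) atTop
      (nhds (if r = p then (r.factorial : ℚ)⁻¹ else 0)) := by
  have key : ∀ᶠ n : ℕ in atTop,
      ((ichoose ((n:ℤ) - a) r : ℚ) / (n:ℚ)^r) * ((n:ℚ)^r / (n:ℚ)^p)
        = (ichoose ((n:ℤ) - a) r : ℚ) / (n:ℚ)^p := by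
    filter_upwards [eventually_ge_atTop 1] with n hn
    have hnQ : ((n:ℚ))^r ≠ 0 := by positivity
    field_simp
  refine Tendsto.congr' key ?_
  have := (lim_choose a r).mul (lim_pow_ratio h)
  split_ifs with hrp
  · rwa [if_pos hrp, mul_one] at this
  · rwa [if_neg hrp, mul_zero] at this

lemma lim_prod2 (a b : ℤ) {r s p : ℕ} (h : r + s ≤ p) :
    Tendsto (fun n : ℕ =>
        (ichoose ((n:ℤ) - a) r : ℚ) * (ichoose ((n:ℤ) - b) s : ℚ) / (n:ℚ)^p) atTop
      (nhds (if r + s = p then (r.factorial : ℚ)⁻¹ * (s.factorial : ℚ)⁻¹ else 0)) := by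
  have key : ∀ᶠ n : ℕ in atTop,
      ((ichoose ((n:ℤ) - a) r : ℚ) / (n:ℚ)^r) * ((ichoose ((n:ℤ) - b) s : ℚ) / (n:ℚ)^s)
          * ((n:ℚ)^(r+s) / (n:ℚ)^p)
        = (ichoose ((n:ℤ) - a) r : ℚ) * (ichoose ((n:ℤ) - b) s : ℚ) / (n:ℚ)^p := by
    filter_upwards [eventually_ge_atTop 1] with n hn
    have hnQ : ((n:ℚ)) ≠ 0 := by positivity
    rw [pow_add]
    field_simp
  refine Tendsto.congr' key ?_
  have := ((lim_choose a r).mul (lim_choose b s)).mul (lim_pow_ratio h)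
  split_ifs with hrp
  · rwa [if_pos hrp, mul_one] at this
  · rwa [if_neg hrp, mul_zero] at this

lemma lim_prodZ (a b B C : ℤ) {p : ℕ} (h : B + C ≤ p) :
    Tendsto (fun n : ℕ =>
        (ichoose ((n:ℤ) - a) B : ℚ) * (ichoose ((n:ℤ) - b) C : ℚ) / (n:ℚ)^p) atTop
      (nhds (if 0 ≤ B ∧ 0 ≤ C ∧ B + C = p then
        ((B.toNat).factorial : ℚ)⁻¹ * ((C.toNat).factorial : ℚ)⁻¹ else 0)) := by
  by_cases hB : 0 ≤ B
  · by_cases hC : 0 ≤ C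
    · have hB' : (B.toNat : ℤ) = B := Int.toNat_of_nonneg hB
      have hC' : (C.toNat : ℤ) = C := Int.toNat_of_nonneg hC
      have hle : B.toNat + C.toNat ≤ p := by omega
      have := lim_prod2 a b (r := B.toNat) (s := C.toNat) (p := p) hle
      rw [hB', hC'] at this
      convert this using 2
      have hiff : (B + C = (p:ℤ)) ↔ (B.toNat + C.toNat = p) := by omega
      simp only [hB, hC, true_and, hiff]
    · simp only [hC, false_and, and_false, if_false]
      have : ∀ n : ℕ, (ichoose ((n:ℤ) - a) B : ℚ) * (ichoose ((n:ℤ) - b) C : ℚ) / (n:ℚ)^p = 0 := by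
        intro n; rw [ichoose_neg (by omega : C < 0)]; simp
      simpa [this] using tendsto_const_nhds
  · simp only [hB, false_and, if_false]
    have : ∀ n : ℕ, (ichoose ((n:ℤ) - a) B : ℚ) * (ichoose ((n:ℤ) - b) C : ℚ) / (n:ℚ)^p = 0 := by
      intro n; rw [ichoose_neg (by omega : B < 0)]; simp
    simpa [this] using tendsto_const_nhds

lemma ichoose_shift {c e n : ℕ} (hce : c ≤ e) (hn : e ≤ n) :
    ichoose ((n:ℤ) - c) ((n:ℤ) - e) = ichoose ((n:ℤ) - c) ((e:ℤ) - c) := by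
  rw [ichoose, if_pos (by omega), ichoose, if_pos (by omega)]
  have h1 : ((n:ℤ) - c).toNat = n - c := by omega
  have h2 : ((n:ℤ) - e).toNat = n - e := by omega
  have h3 : ((e:ℤ) - c).toNat = e - c := by omega
  rw [h1, h2, h3, ← Nat.choose_symm (by omega : n - e ≤ n - c),
    show (n - c) - (n - e) = e - c by omega]

lemma lim_den (d k : ℕ) (hd : 2 ≤ d) :
    Tendsto (fun n : ℕ => (((n:ℚ) - k - 1) * Ffac d n) / (n:ℚ)^(d/2 + 1)) atTop
      (nhds ((1 + (deltaPar d : ℚ)) / (Nat.factorial (d/2) : ℚ))) := by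
  have hδ : deltaPar d = d % 2 := by unfold deltaPar; omega
  set h := d / 2 with hh
  set c3 := (d + 1) / 2 with hc3
  set c4 := (d + 2) / 2 with hc4
  have hc3d : c3 ≤ d := by omega
  have hc4d : c4 ≤ d := by omega
  have hr3 : d - c3 = h := by omega
  -- eventual equality
  have key : ∀ᶠ n : ℕ in atTop,
      (((n:ℚ) - k - 1) * Ffac d n) / (n:ℚ)^(h + 1)
        = (((n:ℚ) - k - 1) / n) *
          ((ichoose ((n:ℤ) - (c3:ℤ)) (h:ℤ) : ℚ) / (n:ℚ)^h
            + (ichoose ((n:ℤ) - (c4:ℤ)) ((d - c4 : ℕ):ℤ) : ℚ) / (n:ℚ)^h) := by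
    filter_upwards [eventually_ge_atTop (d + 1)] with n hn
    have hnQ : (n:ℚ) ≠ 0 := Nat.cast_ne_zero.mpr (by omega)
    have e3 : ichoose ((n:ℤ) - (c3:ℤ)) ((n:ℤ) - (d:ℤ)) = ichoose ((n:ℤ) - (c3:ℤ)) ((h:ℕ):ℤ) := by
      rw [ichoose_shift hc3d (by omega), show ((d:ℤ) - (c3:ℤ)) = ((h:ℕ):ℤ) by omega]
    have e4 : ichoose ((n:ℤ) - (c4:ℤ)) ((n:ℤ) - (d:ℤ))
        = ichoose ((n:ℤ) - (c4:ℤ)) ((d - c4 : ℕ):ℤ) := by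
      rw [ichoose_shift hc4d (by omega), show ((d:ℤ) - (c4:ℤ)) = ((d - c4 : ℕ):ℤ) by omega]
    rw [Ffac, e3, e4, ← add_div, div_mul_div_comm, pow_succ,
      mul_comm ((n:ℚ)^h) (n:ℚ)]
  refine Tendsto.congr' (EventuallyEq.symm key) ?_
  have t1 : Tendsto (fun n : ℕ => ((n:ℚ) - k - 1) / n) atTop (nhds 1) := by
    have key2 : ∀ᶠ n : ℕ in atTop, 1 - ((k:ℚ) + 1) / n = ((n:ℚ) - k - 1) / n := by
      filter_upwards [eventually_ge_atTop 1] with n hn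
      have hnQ : (n:ℚ) ≠ 0 := Nat.cast_ne_zero.mpr (by omega)
      rw [eq_div_iff hnQ, sub_mul, one_mul, div_mul_cancel₀ _ hnQ]
      ring
    refine Tendsto.congr' key2 ?_
    have := (cdivn ((k:ℚ) + 1)).const_sub 1
    rwa [sub_zero] at this
  have t3 : Tendsto (fun n : ℕ => (ichoose ((n:ℤ) - (c3:ℤ)) ((h:ℕ):ℤ) : ℚ) / (n:ℚ)^h) atTop
      (nhds ((h.factorial : ℚ)⁻¹)) := by
    have := lim_choose' (a := (c3:ℤ)) (r := h) (p := h) le_rfl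
    rwa [if_pos rfl] at this
  have t4 : Tendsto (fun n : ℕ => (ichoose ((n:ℤ) - (c4:ℤ)) ((d - c4 : ℕ):ℤ) : ℚ) / (n:ℚ)^h)
      atTop (nhds (if d - c4 = h then (((d - c4 : ℕ)).factorial : ℚ)⁻¹ else 0)) :=
    lim_choose' (a := (c4:ℤ)) (r := d - c4) (p := h) (by omega)
  have := t1.mul (t3.add t4)
  rw [one_mul] at this
  convert this using 2
  by_cases hpar : d % 2 = 0
  · rw [if_neg (by omega), hδ, hpar]
    push_cast
    ring
  · rw [if_pos (by omega), show d - c4 = h by omega, hδ, show d % 2 = 1 by omega]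
    push_cast
    ring

lemma lim_num (d k : ℕ) (hd : 2 ≤ d) (hk : k + 1 ≤ d) :
    Tendsto (fun n : ℕ =>
      (((n:ℚ) - (deltaPar d : ℚ) * ((n:ℚ) - k - 2)) *
        ∑ j ∈ range (d/2 + 1),
          (ichoose ((n:ℤ) - 1 - (j:ℤ)) ((k:ℤ) + 1 - (j:ℤ)) : ℚ) *
            (ichoose ((n:ℤ) - (k:ℤ) - 1) (2*(j:ℤ) - (k:ℤ) - 1 + (deltaPar d : ℤ)) : ℚ))
        / (n:ℚ)^(d/2 + 1))
      atTop (nhds ((if d % 2 = 0 then 1 else (k:ℚ)+2) *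
        (if d/2 ≤ k+1 then ((k+1-d/2).factorial : ℚ)⁻¹ * ((d-k-1).factorial : ℚ)⁻¹ else 0))) := by
  have hδ : deltaPar d = d % 2 := by unfold deltaPar; omega
  set h := d / 2 with hh
  set A0 : ℚ := (if d % 2 = 0 then 1 else (k:ℚ)+2) *
        (if h ≤ k+1 then ((k+1-h).factorial : ℚ)⁻¹ * ((d-k-1).factorial : ℚ)⁻¹ else 0) with hA0
  have hsum : ∀ n : ℕ,
      (((n:ℚ) - (deltaPar d : ℚ) * ((n:ℚ) - k - 2)) *
        ∑ j ∈ range (h + 1),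
          (ichoose ((n:ℤ) - 1 - (j:ℤ)) ((k:ℤ) + 1 - (j:ℤ)) : ℚ) *
            (ichoose ((n:ℤ) - (k:ℤ) - 1) (2*(j:ℤ) - (k:ℤ) - 1 + (deltaPar d : ℤ)) : ℚ))
        / (n:ℚ)^(h + 1)
      = ∑ j ∈ range (h + 1),
          (((n:ℚ) - (deltaPar d : ℚ) * ((n:ℚ) - k - 2)) *
            ((ichoose ((n:ℤ) - 1 - (j:ℤ)) ((k:ℤ) + 1 - (j:ℤ)) : ℚ) *
              (ichoose ((n:ℤ) - (k:ℤ) - 1) (2*(j:ℤ) - (k:ℤ) - 1 + (deltaPar d : ℤ)) : ℚ)))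
            / (n:ℚ)^(h + 1) := by
    intro n
    rw [Finset.mul_sum, Finset.sum_div]
  refine Tendsto.congr (fun n => (hsum n).symm) ?_
  have hterm : ∀ j ∈ range (h + 1),
      Tendsto (fun n : ℕ =>
        (((n:ℚ) - (deltaPar d : ℚ) * ((n:ℚ) - k - 2)) *
          ((ichoose ((n:ℤ) - 1 - (j:ℤ)) ((k:ℤ) + 1 - (j:ℤ)) : ℚ) *
            (ichoose ((n:ℤ) - (k:ℤ) - 1) (2*(j:ℤ) - (k:ℤ) - 1 + (deltaPar d : ℤ)) : ℚ)))
          / (n:ℚ)^(h + 1)) atTop (nhds (if j = h then A0 else 0)) := by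
    intro j hj
    have hjh : j ≤ h := by have := Finset.mem_range.mp hj; omega
    have e1 : ∀ n : ℕ, (n:ℤ) - 1 - (j:ℤ) = (n:ℤ) - (1 + (j:ℤ)) := fun n => by ring
    have e2 : ∀ n : ℕ, (n:ℤ) - (k:ℤ) - 1 = (n:ℤ) - ((k:ℤ) + 1) := fun n => by ring
    by_cases hpar : d % 2 = 0
    · -- even case: prefactor is n
      have hδ0 : deltaPar d = 0 := by omega
      simp only [hδ0, Nat.cast_zero, zero_mul, sub_zero, Int.natCast_zero, add_zero, e1, e2]
      have key : ∀ᶠ n : ℕ in atTop,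
          ((ichoose ((n:ℤ) - (1 + (j:ℤ))) ((k:ℤ) + 1 - (j:ℤ)) : ℚ) *
            (ichoose ((n:ℤ) - ((k:ℤ) + 1)) (2*(j:ℤ) - (k:ℤ) - 1) : ℚ)) / (n:ℚ)^h
          = ((n:ℚ) *
              ((ichoose ((n:ℤ) - (1 + (j:ℤ))) ((k:ℤ) + 1 - (j:ℤ)) : ℚ) *
                (ichoose ((n:ℤ) - ((k:ℤ) + 1)) (2*(j:ℤ) - (k:ℤ) - 1) : ℚ))) / (n:ℚ)^(h + 1) := by
        filter_upwards [eventually_ge_atTop 1] with n hn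
        have hnQ : (n:ℚ) ≠ 0 := Nat.cast_ne_zero.mpr (by omega)
        rw [pow_succ', mul_div_mul_left _ _ hnQ]
      refine Tendsto.congr' key ?_
      have hle : ((k:ℤ) + 1 - (j:ℤ)) + (2*(j:ℤ) - (k:ℤ) - 1) ≤ (h:ℤ) := by omega
      have := lim_prodZ (1 + (j:ℤ)) ((k:ℤ) + 1) ((k:ℤ) + 1 - (j:ℤ)) (2*(j:ℤ) - (k:ℤ) - 1)
        (p := h) hle
      convert this using 2
      rw [hA0, if_pos hpar, one_mul]
      by_cases hjeq : j = h
      · by_cases hjk : h ≤ k + 1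
        · rw [if_pos hjeq, if_pos hjk, if_pos (show _ ∧ _ ∧ _ from ⟨by omega, by omega, by omega⟩)]
          rw [show ((k:ℤ) + 1 - (j:ℤ)).toNat = k + 1 - h by omega,
            show (2*(j:ℤ) - (k:ℤ) - 1).toNat = d - k - 1 by omega]
        · rw [if_pos hjeq, if_neg hjk, if_neg (by omega)]
      · rw [if_neg hjeq, if_neg (by omega)]
    · -- odd case: prefactor is k + 2
      have hδ1 : deltaPar d = 1 := by omega
      simp only [hδ1, Nat.cast_one, one_mul, Int.natCast_one, e1, e2]
      have e3 : ∀ n : ℕ, ((n:ℚ) - ((n:ℚ) - (k:ℚ) - 2)) = (k:ℚ) + 2 := fun n => by ring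
      simp only [e3]
      have key : ∀ n : ℕ,
          (((k:ℚ) + 2) *
            ((ichoose ((n:ℤ) - (1 + (j:ℤ))) ((k:ℤ) + 1 - (j:ℤ)) : ℚ) *
              (ichoose ((n:ℤ) - ((k:ℤ) + 1)) (2*(j:ℤ) - (k:ℤ) - 1 + 1) : ℚ))) / (n:ℚ)^(h + 1)
          = ((k:ℚ) + 2) *
            (((ichoose ((n:ℤ) - (1 + (j:ℤ))) ((k:ℤ) + 1 - (j:ℤ)) : ℚ) *
              (ichoose ((n:ℤ) - ((k:ℤ) + 1)) (2*(j:ℤ) - (k:ℤ) - 1 + 1) : ℚ)) / (n:ℚ)^(h + 1)) :=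
        fun n => by rw [mul_div_assoc]
      refine Tendsto.congr (fun n => (key n).symm) ?_
      have hle : ((k:ℤ) + 1 - (j:ℤ)) + (2*(j:ℤ) - (k:ℤ) - 1 + 1) ≤ ((h + 1 : ℕ):ℤ) := by
        push_cast; omega
      have := (lim_prodZ (1 + (j:ℤ)) ((k:ℤ) + 1) ((k:ℤ) + 1 - (j:ℤ))
        (2*(j:ℤ) - (k:ℤ) - 1 + 1) (p := h + 1) hle).const_mul ((k:ℚ) + 2)
      convert this using 2
      rw [hA0, if_neg hpar]
      by_cases hjeq : j = h
      · by_cases hjk : h ≤ k + 1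
        · rw [if_pos hjeq, if_pos hjk,
            if_pos (show _ ∧ _ ∧ _ from ⟨by omega, by push_cast; omega, by push_cast; omega⟩)]
          rw [show ((k:ℤ) + 1 - (j:ℤ)).toNat = k + 1 - h by omega,
            show (2*(j:ℤ) - (k:ℤ) - 1 + 1).toNat = d - k - 1 by omega]
        · rw [if_pos hjeq, if_neg hjk, if_neg (by push_cast; omega), mul_zero]
      · rw [if_neg hjeq, if_neg (by push_cast; omega), mul_zero]
  have total := tendsto_finset_sum (range (h + 1)) hterm
  rw [Finset.sum_ite_eq' (range (h + 1)) h (fun _ => A0), if_pos (Finset.self_mem_range_succ h)]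
    at total
  exact total

lemma rho_eq (d k : ℕ) (hd : 2 ≤ d) (hk : k + 1 ≤ d) :
    ((if d % 2 = 0 then 1 else (k:ℚ)+2) *
      (if d/2 ≤ k+1 then ((k+1-d/2).factorial : ℚ)⁻¹ * ((d-k-1).factorial : ℚ)⁻¹ else 0))
      / ((1 + (deltaPar d : ℚ)) / (Nat.factorial (d/2) : ℚ)) = rho d (d - k - 1) := by
  have hδ : deltaPar d = d % 2 := by unfold deltaPar; omega
  set h := d/2 with hh
  set s := d - k - 1 with hs
  rw [rho]
  have hfh : ((h.factorial : ℚ)) ≠ 0 := Nat.cast_ne_zero.mpr (Nat.factorial_ne_zero _)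
  have hfs : ((s.factorial : ℚ)) ≠ 0 := Nat.cast_ne_zero.mpr (Nat.factorial_ne_zero _)
  have hfu : (((k+1-h).factorial : ℚ)) ≠ 0 := Nat.cast_ne_zero.mpr (Nat.factorial_ne_zero _)
  by_cases hpar : d % 2 = 0
  · have hδ0 : (deltaPar d : ℚ) = 0 := by rw [hδ, hpar]; simp
    have hch : (d+1)/2 = h := by omega
    rw [if_pos hpar, one_mul, hδ0, hch]
    by_cases hjk : h ≤ k + 1
    · rw [if_pos hjk]
      have hsh : s ≤ h := by omega
      rw [Nat.cast_choose ℚ hsh, show h - s = k+1-h by omega]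
      field_simp
      ring
    · rw [if_neg hjk, show (h.choose s : ℚ) = 0 by
        rw [Nat.choose_eq_zero_of_lt (by omega)]; simp]
      simp
  · have hδ1 : (deltaPar d : ℚ) = 1 := by rw [hδ, show d % 2 = 1 by omega]; simp
    have hch : (d+1)/2 = h + 1 := by omega
    rw [if_neg hpar, hδ1, hch]
    by_cases hjk : h ≤ k + 1
    · rw [if_pos hjk]
      have hsh1 : s ≤ h + 1 := by omega
      rw [Nat.cast_choose ℚ hsh1, show h + 1 - s = k+1-h by omega]
      by_cases hu : s ≤ h
      · -- k ≥ h, so k+1-h ≥ 1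
        rw [Nat.cast_choose ℚ hu, show h - s = k-h by omega]
        have hfu2 : (((k-h).factorial : ℚ)) ≠ 0 := Nat.cast_ne_zero.mpr (Nat.factorial_ne_zero _)
        have e1 : ((k+1-h).factorial : ℚ) = (((k+1-h : ℕ)) : ℚ) * ((k-h).factorial : ℚ) := by
          rw [show k+1-h = (k-h) + 1 by omega, Nat.factorial_succ]
          push_cast
          ring
        have e2 : (((h+1).factorial : ℚ)) = (h+1) * (h.factorial : ℚ) := by
          rw [Nat.factorial_succ]; push_cast; ring
        rw [e1, e2]
        have hku : ((k:ℚ) + 1 - h) ≠ 0 := by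
          have : (1:ℚ) ≤ (k:ℚ) + 1 - h := by
            have : h ≤ k := by omega
            push_cast
            have : (h:ℚ) ≤ k := by exact_mod_cast this
            linarith
          intro hc; rw [hc] at this; norm_num at this
        have hkuQ : (((k+1-h : ℕ)):ℚ) = (k:ℚ) + 1 - h := by push_cast [show h ≤ k+1 from hjk]; ring
        rw [hkuQ]
        field_simp
        ring
      · -- s = h + 1, i.e. k + 1 = h
        rw [show (h.choose s : ℚ) = 0 by rw [Nat.choose_eq_zero_of_lt (by omega)]; simp]
        have hs1 : s = h + 1 := by omega
        have hu0 : k + 1 - h = 0 := by omega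
        rw [hu0, hs1]
        have e2 : (((h+1).factorial : ℚ)) = (h+1) * (h.factorial : ℚ) := by
          rw [Nat.factorial_succ]; push_cast; ring
        have e3 : ((k:ℚ) + 2) = (h:ℚ) + 1 := by
          have : k + 2 = h + 1 := by omega
          exact_mod_cast congrArg (fun z : ℕ => (z:ℚ)) this
        rw [e2, e3]
        have hfh1 : ((h:ℚ) + 1) ≠ 0 := by positivity
        simp only [Nat.factorial_zero, Nat.cast_one, inv_one, one_mul]
        field_simp
        ring
    · rw [if_neg hjk,
        show ((h+1).choose s : ℚ) = 0 by rw [Nat.choose_eq_zero_of_lt (by omega)]; simp,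
        show (h.choose s : ℚ) = 0 by rw [Nat.choose_eq_zero_of_lt (by omega)]; simp]
      simp

end AuxLimits

/-- For fixed `d ≥ 2` and `0 ≤ k ≤ d-1`,
`F(d,n,k) / Ffac(d,n) → ρ(d,d-k-1)` as `n → ∞`. -/
theorem cyclic_ratio_tendsto_rho (d k : ℕ) (hd : 2 ≤ d) (hk : k + 1 ≤ d) :
    Filter.Tendsto (fun n : ℕ => Fcyc d n k / Ffac d n)
      Filter.atTop (nhds (rho d (d - k - 1))) := by
  have hB : ((1 + (deltaPar d : ℚ)) / (Nat.factorial (d/2) : ℚ)) ≠ 0 := by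
    apply div_ne_zero
    · positivity
    · exact Nat.cast_ne_zero.mpr (Nat.factorial_ne_zero _)
  have main := Filter.Tendsto.div (lim_num d k hd hk) (lim_den d k hd) hB
  rw [rho_eq d k hd hk] at main
  refine Filter.Tendsto.congr' ?_ main
  filter_upwards [Filter.eventually_ge_atTop 1] with n hn
  have hnQ : ((n:ℚ))^(d/2+1) ≠ 0 := pow_ne_zero _ (Nat.cast_ne_zero.mpr (by omega))
  simp only [Pi.div_apply]
  rw [div_div_div_cancel_right₀ hnQ, Fcyc, div_mul_eq_mul_div, div_div]
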